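/- Lower-segments construction: given a sequence of monotone maps f : [n_0] → [n_1] → ... → [n_k] in Δ, there is a unique commutative ladder diagram whose top row consists of the top coface maps d^⊤ : [i] → [i+1] for i = 0, ..., k-1, whose bottom row is the given sequence, and all of whose vertical maps [i] → [n_i] are last-point-preserving. The resulting rightmost vertical map β(f) : [k] → [n_k] is given explicitly by i ↦ f_k ∘ ... ∘ f_{i+1}(n_i). -/
import Mathlib
set_option maxHeartbeats 1000000


open CategoryTheory SimplexCategory Opposite

namespace Paper

/-- A monotone map in `Δ` is last-point-preserving. -/
def LastPreserving {a b : SimplexCategory} (f : a ⟶ b) : Prop :=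
  f.toOrderHom (Fin.last a.len) = Fin.last b.len

/-- A monotone map in `Δ` is active (endpoint-preserving). -/
def Active {a b : SimplexCategory} (f : a ⟶ b) : Prop :=
  f.toOrderHom 0 = 0 ∧ LastPreserving f

/-- Given a chain `[n 0] ⟶ [n 1] ⟶ ⋯ ⟶ [n k]` in `Δ`, the composite
`f_k ∘ ⋯ ∘ f_{i+1} : [n i] ⟶ [n k]` of the tail of the chain. -/
def tailComp {k : ℕ} (n : Fin (k + 1) → ℕ)
    (F : ∀ i : Fin k, SimplexCategory.mk (n i.castSucc) ⟶ SimplexCategory.mk (n i.succ)) :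
    ∀ i : Fin (k + 1), (SimplexCategory.mk (n i) ⟶ SimplexCategory.mk (n (Fin.last k))) :=
  fun i =>
    if h : (i : ℕ) = k then
      eqToHom (by rw [show i = Fin.last k from Fin.ext h])
    else
      have hlt : (i : ℕ) < k := by have := i.is_lt; omega
      F ⟨(i : ℕ), hlt⟩ ≫ tailComp n F ⟨(i : ℕ) + 1, by omega⟩
  termination_by i => k - (i : ℕ)
  decreasing_by simp_wf; omega


/-- A lower-segments ladder over the chain `F` : the top row consists of the
top coface maps `d^⊤ : [i] ⟶ [i+1]`, the bottom row is the chain, and the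
vertical maps `v i : [i] ⟶ [n i]` are last-point-preserving and make the
ladder commute. -/
def IsLowerLadder {k : ℕ} (n : Fin (k + 1) → ℕ)
    (F : ∀ i : Fin k, SimplexCategory.mk (n i.castSucc) ⟶ SimplexCategory.mk (n i.succ))
    (v : ∀ i : Fin (k + 1), SimplexCategory.mk (i : ℕ) ⟶ SimplexCategory.mk (n i)) : Prop :=
  (∀ i, LastPreserving (v i)) ∧
  ∀ i : Fin k, v i.castSucc ≫ F i =
    SimplexCategory.δ (Fin.last ((i : ℕ) + 1)) ≫ v i.succ

section Aux

variable {k : ℕ} (n : Fin (k + 1) → ℕ)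
    (F : ∀ i : Fin k, SimplexCategory.mk (n i.castSucc) ⟶ SimplexCategory.mk (n i.succ))

lemma eqToHom_last {a b : SimplexCategory} (h : a = b) :
    (eqToHom h).toOrderHom (Fin.last a.len) = Fin.last b.len := by
  subst h; rfl

/-- composite `F (i-1) ∘ ⋯ ∘ F j : [n j] ⟶ [n i]`. -/
def comp : ∀ (i : ℕ) (_ : i ≤ k) (j : ℕ) (_ : j ≤ i),
    SimplexCategory.mk (n ⟨j, by omega⟩) ⟶ SimplexCategory.mk (n ⟨i, by omega⟩)
  | 0, _, j, hj => eqToHom (by have : j = 0 := Nat.le_zero.mp hj; subst this; rfl)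
  | i + 1, hi, j, hj =>
    if h : j = i + 1 then eqToHom (by subst h; rfl)
    else comp i (by omega) j (by omega) ≫ F ⟨i, by omega⟩

lemma comp_self (i : ℕ) (hi : i ≤ k) :
    (comp n F i hi i le_rfl).toOrderHom (Fin.last _) = Fin.last _ := by
  cases i with
  | zero => exact eqToHom_last _
  | succ i =>
    rw [comp, dif_pos rfl]
    exact eqToHom_last _

lemma comp_self_hom (i : ℕ) (hi : i ≤ k) (h : i ≤ i) :
    comp n F i hi i h = eqToHom rfl := by
  cases i with
  | zero => rfl
  | succ i => rw [comp, dif_pos rfl]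

lemma comp_mono : ∀ (i : ℕ) (hi : i ≤ k) (j1 j2 : ℕ) (h1 : j1 ≤ i) (h2 : j2 ≤ i),
    j1 ≤ j2 →
    ((comp n F i hi j1 h1).toOrderHom (Fin.last _) : ℕ) ≤
      ((comp n F i hi j2 h2).toOrderHom (Fin.last _) : ℕ)
  | 0, hi, j1, j2, h1, h2, h => by
    have e1 : j1 = 0 := by omega
    have e2 : j2 = 0 := by omega
    subst e1; subst e2; exact le_rfl
  | i + 1, hi, j1, j2, h1, h2, h => by
    by_cases h2' : j2 = i + 1
    · subst h2'
      rw [comp_self_hom, eqToHom_last]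
      exact Nat.lt_succ_iff.mp (Fin.is_lt _)
    · have h1' : j1 ≠ i + 1 := by omega
      rw [comp, dif_neg h1', comp, dif_neg h2']
      exact (F ⟨i, by omega⟩).toOrderHom.monotone
        (comp_mono i (by omega) j1 j2 (by omega) (by omega) h)

lemma comp_peel : ∀ (i : ℕ) (hi : i ≤ k) (j : ℕ) (hj : j < i),
    comp n F i hi j (le_of_lt hj) =
      F ⟨j, by omega⟩ ≫ comp n F i hi (j + 1) hj
  | 0, hi, j, hj => absurd hj (Nat.not_lt_zero j)
  | i + 1, hi, j, hj => by
    rw [comp, dif_neg (by omega : j ≠ i + 1)]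
    by_cases hji : j = i
    · subst hji
      rw [comp_self_hom, comp_self_hom]
      simp
    · rw [comp_peel i (by omega) j (by omega), comp, dif_neg (by omega : j + 1 ≠ i + 1),
        Category.assoc]

/-- The canonical vertical map `[i] ⟶ [n i]`. -/
def vAux (i : ℕ) (hi : i ≤ k) : SimplexCategory.mk i ⟶ SimplexCategory.mk (n ⟨i, by omega⟩) :=
  SimplexCategory.Hom.mk
    { toFun := fun j => (comp n F i hi (j : ℕ) (j.is_le : (j : ℕ) ≤ i)).toOrderHom (Fin.last _)
      monotone' := fun j1 j2 h =>
        comp_mono n F i hi (j1 : ℕ) (j2 : ℕ) (j1.is_le : (j1 : ℕ) ≤ i)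
          (j2.is_le : (j2 : ℕ) ≤ i) h }

lemma vAux_apply (i : ℕ) (hi : i ≤ k) (j : Fin (i + 1)) (hj : (j : ℕ) ≤ i) :
    (vAux n F i hi).toOrderHom j =
      (comp n F i hi (j : ℕ) hj).toOrderHom (Fin.last _) := rfl

lemma vAux_last (i : ℕ) (hi : i ≤ k) : LastPreserving (vAux n F i hi) := by
  show (comp n F i hi i le_rfl).toOrderHom (Fin.last _) = _
  rw [comp_self_hom, eqToHom_last]

lemma vAux_ladder (i : Fin k) :
    vAux n F (i : ℕ) (le_of_lt i.is_lt) ≫ F i =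
      SimplexCategory.δ (Fin.last ((i : ℕ) + 1)) ≫ vAux n F ((i : ℕ) + 1) i.is_lt := by
  apply SimplexCategory.Hom.ext
  apply OrderHom.ext
  funext j
  change (F i).toOrderHom ((vAux n F (i : ℕ) _).toOrderHom j) =
    (vAux n F ((i : ℕ) + 1) _).toOrderHom
      ((SimplexCategory.δ (Fin.last ((i : ℕ) + 1))).toOrderHom j)
  have h1 : (SimplexCategory.δ (Fin.last ((i : ℕ) + 1))).toOrderHom j = j.castSucc :=
    congrFun Fin.succAbove_last j
  rw [h1]
  have hj : (j : ℕ) ≤ (i : ℕ) := j.is_le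
  have hj1 : (j : ℕ) ≤ (i : ℕ) + 1 := by omega
  show (F i).toOrderHom ((comp n F (i : ℕ) (le_of_lt i.is_lt) (j : ℕ) hj).toOrderHom (Fin.last _)) =
    (comp n F ((i : ℕ) + 1) i.is_lt (j : ℕ) hj1).toOrderHom (Fin.last _)
  rw [comp, dif_neg (by omega : ¬ (j : ℕ) = (i : ℕ) + 1)]
  rfl

lemma comp_peel' (i : ℕ) (hi : i ≤ k) (j : ℕ) (hj : j < i) (h : j ≤ i) :
    comp n F i hi j h = F ⟨j, by omega⟩ ≫ comp n F i hi (j + 1) hj :=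
  comp_peel n F i hi j hj

lemma ladder_unique (v : ∀ i : Fin (k + 1), SimplexCategory.mk (i : ℕ) ⟶ SimplexCategory.mk (n i))
    (hv : IsLowerLadder n F v) :
    ∀ (m : ℕ) (hm : m < k + 1), v ⟨m, hm⟩ = vAux n F m (Nat.lt_succ_iff.mp hm) := by
  intro m
  induction m with
  | zero =>
    intro hm
    apply SimplexCategory.Hom.ext; apply OrderHom.ext; funext j
    have hle : (j : ℕ) ≤ 0 := j.is_le
    have hj : j = Fin.last 0 := Fin.ext (show (j : ℕ) = 0 by omega)
    subst hj
    exact (hv.1 ⟨0, hm⟩).trans (vAux_last n F 0 _).symm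
  | succ m ih =>
    intro hm
    apply SimplexCategory.Hom.ext; apply OrderHom.ext; funext j
    by_cases hj : (j : ℕ) = m + 1
    · have hj' : j = Fin.last (m + 1) := Fin.ext hj
      subst hj'
      exact (hv.1 ⟨m + 1, hm⟩).trans (vAux_last n F (m + 1) _).symm
    · have hjm : (j : ℕ) < m + 1 :=
        lt_of_le_of_ne (j.is_le : (j : ℕ) ≤ m + 1) hj
      set jc : Fin (m + 1) := ⟨(j : ℕ), hjm⟩ with hjc
      have hmk : m < k := by omega
      have hmlt : m < k + 1 := by omega
      have hlad := hv.2 ⟨m, hmk⟩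
      have happ := DFunLike.congr_fun (congrArg SimplexCategory.Hom.toOrderHom hlad) jc
      have e : (SimplexCategory.δ (Fin.last (m + 1))).toOrderHom jc
          = jc.castSucc := congrFun Fin.succAbove_last jc
      have happ' : (F ⟨m, hmk⟩).toOrderHom ((v ⟨m, hmlt⟩).toOrderHom jc)
          = (v ⟨m + 1, hm⟩).toOrderHom
              ((SimplexCategory.δ (Fin.last (m + 1))).toOrderHom jc) := happ
      rw [e] at happ'
      have happ'' : (F ⟨m, hmk⟩).toOrderHom ((v ⟨m, hmlt⟩).toOrderHom jc)
          = (v ⟨m + 1, hm⟩).toOrderHom j := happ' 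
      calc (v ⟨m + 1, hm⟩).toOrderHom j
          = (F ⟨m, hmk⟩).toOrderHom ((v ⟨m, hmlt⟩).toOrderHom jc) := happ''.symm
        _ = (F ⟨m, hmk⟩).toOrderHom
              ((vAux n F m (Nat.lt_succ_iff.mp hmlt)).toOrderHom jc) := by rw [ih hmlt]
        _ = (vAux n F (m + 1) (Nat.lt_succ_iff.mp hm)).toOrderHom j := by
            show (F ⟨m, hmk⟩).toOrderHom
                ((comp n F m (by omega) (j : ℕ) (by omega)).toOrderHom (Fin.last _)) =
              (comp n F (m + 1) (by omega) (j : ℕ) (by omega)).toOrderHom (Fin.last _)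
            rw [comp, dif_neg hj]
            rfl

lemma tail_eq : ∀ (d m : ℕ) (hm : m < k + 1), k - m = d →
    tailComp n F ⟨m, hm⟩ = comp n F k le_rfl m (Nat.lt_succ_iff.mp hm)
  | 0, m, hm, hd => by
    have hmk : m = k := by omega
    subst hmk
    rw [tailComp, dif_pos (rfl : ((⟨m, hm⟩ : Fin (m + 1)) : ℕ) = m), comp_self_hom]
  | d + 1, m, hm, hd => by
    have hmk : m < k := by omega
    rw [tailComp, dif_neg (show ¬ ((⟨m, hm⟩ : Fin (k + 1)) : ℕ) = k by simp; omega),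
      comp_peel' n F k le_rfl m hmk (by omega)]
    show F ⟨m, hmk⟩ ≫ tailComp n F ⟨m + 1, by omega⟩ = _
    rw [tail_eq d (m + 1) (by omega) (by omega)]

lemma tail_eq' (j : Fin (k + 1)) :
    tailComp n F j = comp n F k le_rfl (j : ℕ) (Nat.lt_succ_iff.mp j.is_lt) :=
  tail_eq n F (k - (j : ℕ)) (j : ℕ) j.is_lt rfl

end Aux

/-- Lower-segments construction: for any chain `[n 0] ⟶ ⋯ ⟶ [n k]` in `Δ`
there is a unique lower-segments ladder, and its rightmost vertical map
`β(f) : [k] ⟶ [n k]` is given by `j ↦ f_k ∘ ⋯ ∘ f_{j+1}` applied to the last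
element of `[n j]`. -/
theorem lowerSegments {k : ℕ} (n : Fin (k + 1) → ℕ)
    (F : ∀ i : Fin k, SimplexCategory.mk (n i.castSucc) ⟶ SimplexCategory.mk (n i.succ)) :
    (∃! v : ∀ i : Fin (k + 1), SimplexCategory.mk (i : ℕ) ⟶ SimplexCategory.mk (n i),
      IsLowerLadder n F v) ∧
    (∀ v, IsLowerLadder n F v → ∀ j : Fin (k + 1),
      (v (Fin.last k)).toOrderHom j =
        (tailComp n F j).toOrderHom (Fin.last (n j))) := by
  have formula : ∀ v, IsLowerLadder n F v → ∀ j : Fin (k + 1),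
      (v (Fin.last k)).toOrderHom j =
        (tailComp n F j).toOrderHom (Fin.last (n j)) := by
    intro v hv j
    have h1 : v (Fin.last k) = vAux n F k le_rfl :=
      ladder_unique n F v hv k (Nat.lt_succ_of_le le_rfl)
    rw [h1, tail_eq' n F j]
    rfl
  refine ⟨⟨fun i => vAux n F (i : ℕ) (Nat.lt_succ_iff.mp i.is_lt), ⟨?_, ?_⟩, ?_⟩, formula⟩
  · intro i
    exact vAux_last n F (i : ℕ) _
  · intro i
    exact vAux_ladder n F i
  · intro v' hv'
    funext i
    exact ladder_unique n F v' hv' (i : ℕ) i.is_lt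

end Paper
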